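/- Let S and A be nonempty finite subsets of normed spaces, each with ℓ1 diameter at most 1. Let γ ∈ [0, 1), let r̄ : S × A → ℝ satisfy |r̄(s₁, a) − r̄(s₂, a)| ≤ d_r ‖s₁ − s₂‖₁ for all a, and let P̄ : S × A → Δ(S) satisfy ‖P̄(·|s₁, a) − P̄(·|s₂, a)‖₁ ≤ d_P ‖s₁ − s₂‖₁ for all a, with d_r, d_P ≥ 0. Define the Bellman operator (T Q)(s) = max_{a ∈ A} [ r̄(s, a) + γ ∑_{s′ ∈ S} Q(s′) P̄(s′|s, a) ]. If Q : S → ℝ is d_K-Lipschitz with respect to ‖·‖₁ (i.e., |Q(s₁) − Q(s₂)| ≤ d_K ‖s₁ − s₂‖₁), then T Q is (d_r + γ d_K d_P / 2)-Lipschitz: |T Q(s₁) − T Q(s₂)| ≤ (d_r + γ d_K d_P / 2) ‖s₁ − s₂‖₁. -/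
import Mathlib

lemma abs_sup'_sub_sup'_le {W : Type*} (A : Finset W) (hA : A.Nonempty)
    (f g : W → ℝ) (c : ℝ) (h : ∀ a ∈ A, |f a - g a| ≤ c) :
    |A.sup' hA f - A.sup' hA g| ≤ c := by
  rw [abs_sub_le_iff]
  constructor
  · rw [sub_le_iff_le_add]
    apply Finset.sup'_le
    intro a ha
    have h1 := (abs_sub_le_iff.mp (h a ha)).1
    have h2 : g a ≤ A.sup' hA g := Finset.le_sup' g ha
    linarith
  · rw [sub_le_iff_le_add]
    apply Finset.sup'_le
    intro a ha
    have h1 := (abs_sub_le_iff.mp (h a ha)).2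
    have h2 : f a ≤ A.sup' hA f := Finset.le_sup' f ha
    linarith

/-- Bellman optimality operator of a discounted MDP with finite state set `S`,
finite action set `A`, reward `rbar` and transition kernel `Pbar`:
`(T Q)(s) = max_{a ∈ A} [ rbar s a + γ ∑_{s' ∈ S} Q s' · Pbar s a s' ]`. -/
noncomputable def bellman {V W : Type*} [NormedAddCommGroup V] [NormedAddCommGroup W]
    (S : Finset V) (A : Finset W) (hA : A.Nonempty) (γ : ℝ)
    (rbar : V → W → ℝ) (Pbar : V → W → V → ℝ) (Q : V → ℝ) : V → ℝ :=
  fun s => A.sup' hA (fun a => rbar s a + γ * ∑ s' ∈ S, Q s' * Pbar s a s')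

/-- If `rbar` is `d_r`-Lipschitz in the state, `Pbar` is `d_P`-Lipschitz in the state
in ℓ1, the state and action sets have diameter at most 1, and `Q` is `d_K`-Lipschitz,
then `T Q` is `(d_r + γ d_K d_P / 2)`-Lipschitz on `S`. -/
theorem bellman_lipschitz
    {V W : Type*} [NormedAddCommGroup V] [NormedAddCommGroup W]
    (S : Finset V) (A : Finset W) (hS : S.Nonempty) (hA : A.Nonempty)
    (hSdiam : ∀ s₁ ∈ S, ∀ s₂ ∈ S, ‖s₁ - s₂‖ ≤ 1)
    (hAdiam : ∀ a₁ ∈ A, ∀ a₂ ∈ A, ‖a₁ - a₂‖ ≤ 1)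
    (γ : ℝ) (hγ0 : 0 ≤ γ) (hγ1 : γ < 1)
    (d_r d_P : ℝ) (hdr : 0 ≤ d_r) (hdP : 0 ≤ d_P)
    (rbar : V → W → ℝ) (Pbar : V → W → V → ℝ)
    (hr : ∀ a ∈ A, ∀ s₁ ∈ S, ∀ s₂ ∈ S,
      |rbar s₁ a - rbar s₂ a| ≤ d_r * ‖s₁ - s₂‖)
    (hPmem : ∀ s ∈ S, ∀ a ∈ A,
      (∀ s' ∈ S, 0 ≤ Pbar s a s') ∧ ∑ s' ∈ S, Pbar s a s' = 1)
    (hPlip : ∀ a ∈ A, ∀ s₁ ∈ S, ∀ s₂ ∈ S,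
      ∑ s' ∈ S, |Pbar s₁ a s' - Pbar s₂ a s'| ≤ d_P * ‖s₁ - s₂‖)
    (d_K : ℝ) (hdK : 0 ≤ d_K)
    (Q : V → ℝ)
    (hQ : ∀ s₁ ∈ S, ∀ s₂ ∈ S, |Q s₁ - Q s₂| ≤ d_K * ‖s₁ - s₂‖) :
    ∀ s₁ ∈ S, ∀ s₂ ∈ S,
      |bellman S A hA γ rbar Pbar Q s₁ - bellman S A hA γ rbar Pbar Q s₂|
        ≤ (d_r + γ * d_K * d_P / 2) * ‖s₁ - s₂‖ := by
  intro s₁ hs₁ s₂ hs₂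
  set c : ℝ := (S.sup' hS Q + S.inf' hS Q) / 2 with hc
  -- |Q s - c| ≤ d_K / 2 for s ∈ S
  have hQc : ∀ s ∈ S, |Q s - c| ≤ d_K / 2 := by
    intro s hs
    have h1 : Q s ≤ S.sup' hS Q := Finset.le_sup' Q hs
    have h2 : S.inf' hS Q ≤ Q s := Finset.inf'_le Q hs
    obtain ⟨smax, hsmax, hmaxeq⟩ := Finset.exists_mem_eq_sup' hS Q
    obtain ⟨smin, hsmin, hmineq⟩ := Finset.exists_mem_eq_inf' hS Q
    have hQd := hQ smax hsmax smin hsmin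
    have hd := hSdiam smax hsmax smin hsmin
    have habs : Q smax - Q smin ≤ d_K := by
      have := le_abs_self (Q smax - Q smin)
      nlinarith
    have hgap : S.sup' hS Q - S.inf' hS Q ≤ d_K := by
      rw [hmaxeq, hmineq]; exact habs
    rw [abs_le]
    constructor <;> simp only [hc] <;> linarith
  apply abs_sup'_sub_sup'_le
  intro a ha
  have hP1 := hPmem s₁ hs₁ a ha
  have hP2 := hPmem s₂ hs₂ a ha
  have hsum : (∑ s' ∈ S, Q s' * Pbar s₁ a s') - (∑ s' ∈ S, Q s' * Pbar s₂ a s')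
      = ∑ s' ∈ S, (Q s' - c) * (Pbar s₁ a s' - Pbar s₂ a s') := by
    have hexp : ∀ s' ∈ S, (Q s' - c) * (Pbar s₁ a s' - Pbar s₂ a s')
        = (Q s' * Pbar s₁ a s' - Q s' * Pbar s₂ a s')
          - (c * Pbar s₁ a s' - c * Pbar s₂ a s') := by
      intro s' _; ring
    rw [Finset.sum_congr rfl hexp, Finset.sum_sub_distrib, Finset.sum_sub_distrib,
      Finset.sum_sub_distrib, ← Finset.mul_sum, ← Finset.mul_sum, hP1.2, hP2.2]
    ring
  have hbound : |(∑ s' ∈ S, Q s' * Pbar s₁ a s') - (∑ s' ∈ S, Q s' * Pbar s₂ a s')|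
      ≤ d_K / 2 * (d_P * ‖s₁ - s₂‖) := by
    rw [hsum]
    calc |∑ s' ∈ S, (Q s' - c) * (Pbar s₁ a s' - Pbar s₂ a s')|
        ≤ ∑ s' ∈ S, |(Q s' - c) * (Pbar s₁ a s' - Pbar s₂ a s')| :=
          Finset.abs_sum_le_sum_abs _ _
      _ ≤ ∑ s' ∈ S, d_K / 2 * |Pbar s₁ a s' - Pbar s₂ a s'| := by
          apply Finset.sum_le_sum
          intro s' hs'
          rw [abs_mul]
          exact mul_le_mul_of_nonneg_right (hQc s' hs') (abs_nonneg _)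
      _ = d_K / 2 * ∑ s' ∈ S, |Pbar s₁ a s' - Pbar s₂ a s'| := by
          rw [Finset.mul_sum]
      _ ≤ d_K / 2 * (d_P * ‖s₁ - s₂‖) := by
          apply mul_le_mul_of_nonneg_left (hPlip a ha s₁ hs₁ s₂ hs₂) (by linarith)
  have hrb := hr a ha s₁ hs₁ s₂ hs₂
  have key : |(rbar s₁ a + γ * ∑ s' ∈ S, Q s' * Pbar s₁ a s')
      - (rbar s₂ a + γ * ∑ s' ∈ S, Q s' * Pbar s₂ a s')|
      ≤ (d_r + γ * d_K * d_P / 2) * ‖s₁ - s₂‖ := by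
    have h1 : (rbar s₁ a + γ * ∑ s' ∈ S, Q s' * Pbar s₁ a s')
        - (rbar s₂ a + γ * ∑ s' ∈ S, Q s' * Pbar s₂ a s')
        = (rbar s₁ a - rbar s₂ a)
          + γ * ((∑ s' ∈ S, Q s' * Pbar s₁ a s') - ∑ s' ∈ S, Q s' * Pbar s₂ a s') := by
      ring
    rw [h1]
    calc |(rbar s₁ a - rbar s₂ a)
          + γ * ((∑ s' ∈ S, Q s' * Pbar s₁ a s') - ∑ s' ∈ S, Q s' * Pbar s₂ a s')|
        ≤ |rbar s₁ a - rbar s₂ a|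
          + |γ * ((∑ s' ∈ S, Q s' * Pbar s₁ a s') - ∑ s' ∈ S, Q s' * Pbar s₂ a s')| :=
          abs_add_le _ _
      _ ≤ d_r * ‖s₁ - s₂‖ + γ * (d_K / 2 * (d_P * ‖s₁ - s₂‖)) := by
          rw [abs_mul, abs_of_nonneg hγ0]
          exact add_le_add hrb (mul_le_mul_of_nonneg_left hbound hγ0)
      _ = (d_r + γ * d_K * d_P / 2) * ‖s₁ - s₂‖ := by ring
  exact key
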